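/- The function J : ℝ^d → ℝ is differentiable, and for every θ ∈ ℝ^d its gradient is ∇J(θ) = (ΦᵀΞ(P^{(λ)} − I)Φ)ᵀ x_θ, where x_θ is the unique solution in span{φ(S)} of the linear system ΦᵀΞΦx = ΦᵀΞ(T^{(λ)}v_θ − v_θ). -/

import Mathlib

open Matrix

private lemma dot_pos_aux {n : ℕ} (ξ : Fin n → ℝ) (hξ : ∀ i, 0 < ξ i) (y : Fin n → ℝ)
    (h : y ⬝ᵥ (Matrix.diagonal ξ).mulVec y = 0) : y = 0 := by
  have hnn : ∀ i ∈ Finset.univ, (0:ℝ) ≤ y i * (ξ i * y i) := by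
    intro i _
    have := mul_nonneg (hξ i).le (mul_self_nonneg (y i))
    nlinarith [this]
  have hsum : ∑ i, y i * (ξ i * y i) = 0 := by
    simpa [dotProduct, Matrix.mulVec_diagonal] using h
  funext i
  have hi := (Finset.sum_eq_zero_iff_of_nonneg hnn).mp hsum i (Finset.mem_univ i)
  have h0 : ξ i * (y i * y i) = 0 := by linear_combination hi
  rcases mul_eq_zero.mp h0 with h1 | h1
  · exact absurd h1 (hξ i).ne'
  · exact mul_self_eq_zero.mp h1

private lemma dotT_left {m k : ℕ} (A : Matrix (Fin m) (Fin k) ℝ) (w : Fin m → ℝ) (x : Fin k → ℝ) :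
    Aᵀ.mulVec w ⬝ᵥ x = w ⬝ᵥ A.mulVec x := by
  rw [Matrix.mulVec_transpose, ← Matrix.dotProduct_mulVec]

private lemma dotT_right {m k : ℕ} (A : Matrix (Fin m) (Fin k) ℝ) (x : Fin k → ℝ) (w : Fin m → ℝ) :
    x ⬝ᵥ Aᵀ.mulVec w = A.mulVec x ⬝ᵥ w := by
  rw [Matrix.dotProduct_mulVec, Matrix.vecMul_transpose]

/-- The projected-Bellman-error objective `J` is differentiable with
`∇J(θ) = (ΦᵀΞ(P^{(λ)} − I)Φ)ᵀ x_θ`, where `x_θ` is the unique solution in `span{φ(S)}`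
of the linear system `ΦᵀΞΦx = ΦᵀΞ(T^{(λ)}v_θ − v_θ)`. -/
theorem stmt_1
    (n d : ℕ) (hn : 0 < n) (hd : 0 < d)
    (Φ : Matrix (Fin n) (Fin d) ℝ) (hΦ : Φ ≠ 0)
    (ξ : Fin n → ℝ) (hξ : ∀ i, 0 < ξ i)
    (Ξ : Matrix (Fin n) (Fin n) ℝ) (hΞ : Ξ = Matrix.diagonal ξ)
    -- `proj` is the ⟨·,·⟩_ξ-orthogonal projection onto the column space of Φ
    (proj : (Fin n → ℝ) → (Fin n → ℝ))
    (hproj_mem : ∀ v : Fin n → ℝ, ∃ θ : Fin d → ℝ, proj v = Φ.mulVec θ)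
    (hproj_orth : ∀ (v : Fin n → ℝ) (θ : Fin d → ℝ),
      Φ.mulVec θ ⬝ᵥ Ξ.mulVec (v - proj v) = 0)
    -- the affine generalized Bellman operator `T v = r + P v`
    (P : Matrix (Fin n) (Fin n) ℝ) (r : Fin n → ℝ)
    (T : (Fin n → ℝ) → (Fin n → ℝ)) (hT : ∀ v, T v = r + P.mulVec v)
    -- the objective function `J(θ) = ½‖Π_ξ(T v_θ − v_θ)‖²_ξ`
    (J : EuclideanSpace ℝ (Fin d) → ℝ)
    (hJ : ∀ θ : EuclideanSpace ℝ (Fin d),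
      J θ = (1 / 2) * (proj (T (Φ.mulVec θ) - Φ.mulVec θ) ⬝ᵥ
          Ξ.mulVec (proj (T (Φ.mulVec θ) - Φ.mulVec θ)))) :
    ∀ θ : EuclideanSpace ℝ (Fin d),
      (∃! x : Fin d → ℝ,
        x ∈ Submodule.span ℝ (Set.range (fun i : Fin n => Φ i)) ∧
        (Φᵀ * Ξ * Φ).mulVec x = (Φᵀ * Ξ).mulVec (T (Φ.mulVec θ) - Φ.mulVec θ)) ∧
      (∀ x : Fin d → ℝ,
        x ∈ Submodule.span ℝ (Set.range (fun i : Fin n => Φ i)) →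
        (Φᵀ * Ξ * Φ).mulVec x = (Φᵀ * Ξ).mulVec (T (Φ.mulVec θ) - Φ.mulVec θ) →
        HasGradientAt J (WithLp.toLp 2 ((Φᵀ * Ξ * (P - 1) * Φ)ᵀ.mulVec x)) θ) := by
  subst hΞ
  set D := Matrix.diagonal ξ with hD
  -- symmetry of the weighted product
  have hsymm : ∀ u v : Fin n → ℝ, u ⬝ᵥ D.mulVec v = v ⬝ᵥ D.mulVec u := by
    intro u v
    simp only [hD, dotProduct, Matrix.mulVec_diagonal]
    exact Finset.sum_congr rfl fun i _ => by ring
  -- positive definiteness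
  have hpos : ∀ y : Fin n → ℝ, y ⬝ᵥ D.mulVec y = 0 → y = 0 := fun y hy =>
    dot_pos_aux ξ hξ y hy
  -- the kernel of ΦᵀDΦ equals the kernel of Φ
  have hker : ∀ c : Fin d → ℝ, (Φᵀ * D * Φ).mulVec c = 0 → Φ.mulVec c = 0 := by
    intro c hc
    apply hpos
    have h1 : c ⬝ᵥ (Φᵀ * D * Φ).mulVec c = 0 := by rw [hc]; simp
    rw [Matrix.mul_assoc, ← Matrix.mulVec_mulVec, dotT_right, ← Matrix.mulVec_mulVec] at h1
    exact h1
  -- membership in the row span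
  have hR : ∀ z : Fin d → ℝ, z ∈ Submodule.span ℝ (Set.range (fun i : Fin n => Φ i)) ↔
      ∃ c : Fin n → ℝ, Φᵀ.mulVec c = z := by
    intro z
    have : Set.range (fun i : Fin n => Φ i) = Set.range (Φᵀ).col := by rfl
    rw [this, ← Matrix.range_mulVecLin]
    exact ⟨fun h => h, fun h => h⟩
  -- vectors in the row span killed by Φ are zero
  have huniq0 : ∀ z : Fin d → ℝ,
      z ∈ Submodule.span ℝ (Set.range (fun i : Fin n => Φ i)) → Φ.mulVec z = 0 → z = 0 := by
    intro z hz h0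
    obtain ⟨c, rfl⟩ := (hR z).mp hz
    have : Φᵀ.mulVec c ⬝ᵥ Φᵀ.mulVec c = 0 := by
      rw [dotT_left, h0, dotProduct_zero]
    exact dotProduct_self_eq_zero.mp this
  intro θ
  set g : Fin n → ℝ := T (Φ.mulVec θ) - Φ.mulVec θ with hg
  obtain ⟨a, ha⟩ := hproj_mem g
  -- the normal equations hold for a
  have hAa : (Φᵀ * D * Φ).mulVec a = (Φᵀ * D).mulVec g := by
    have key : Φᵀ.mulVec (D.mulVec (g - Φ.mulVec a)) = 0 := by
      have hall : ∀ c : Fin d → ℝ, c ⬝ᵥ Φᵀ.mulVec (D.mulVec (g - Φ.mulVec a)) = 0 := by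
        intro c
        rw [dotT_right]
        have := hproj_orth g c
        rwa [ha] at this
      have := hall (Φᵀ.mulVec (D.mulVec (g - Φ.mulVec a)))
      exact dotProduct_self_eq_zero.mp this
    have : Φᵀ.mulVec (D.mulVec g) - Φᵀ.mulVec (D.mulVec (Φ.mulVec a)) = 0 := by
      rw [← Matrix.mulVec_sub, ← Matrix.mulVec_sub]
      exact key
    rw [Matrix.mul_assoc, ← Matrix.mulVec_mulVec, ← Matrix.mulVec_mulVec,
      ← Matrix.mulVec_mulVec]
    rw [sub_eq_zero] at this
    exact this.symm
  -- orthogonal decomposition of a : the part in the row span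
  set K : Submodule ℝ (EuclideanSpace ℝ (Fin d)) :=
    Submodule.span ℝ (Set.range (fun i : Fin n => WithLp.toLp 2 (Φ i : Fin d → ℝ)))
    with hK
  set aE : EuclideanSpace ℝ (Fin d) := WithLp.toLp 2 (a : Fin d → ℝ) with haE
  set x₀E : EuclideanSpace ℝ (Fin d) := (K.orthogonalProjectionOnto aE : EuclideanSpace ℝ (Fin d))
    with hx₀E
  set x₀ : Fin d → ℝ := x₀E.ofLp with hx₀
  have hKmem : ∀ z : EuclideanSpace ℝ (Fin d), z ∈ K ↔
      z.ofLp ∈ Submodule.span ℝ (Set.range (fun i : Fin n => Φ i)) := fun z => by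
    have hKe : K = (Submodule.span ℝ (Set.range (fun i : Fin n => Φ i))).map
        ((WithLp.linearEquiv 2 ℝ (Fin d → ℝ)).symm : (Fin d → ℝ) →ₗ[ℝ] EuclideanSpace ℝ (Fin d)) := by
      rw [Submodule.map_span, ← Set.range_comp]; rfl
    rw [hKe, Submodule.mem_map_equiv]; rfl
  have hx₀R : x₀ ∈ Submodule.span ℝ (Set.range (fun i : Fin n => Φ i)) :=
    (hKmem x₀E).mp (K.orthogonalProjectionOnto aE).2
  have hx₀ker : Φ.mulVec (a - x₀) = 0 := by
    have horth : aE - x₀E ∈ Kᗮ := Submodule.sub_starProjection_mem_orthogonal (K := K) aE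
    funext i
    have hiK : WithLp.toLp 2 (Φ i : Fin d → ℝ) ∈ K :=
      Submodule.subset_span ⟨i, rfl⟩
    have h1 := (Submodule.mem_orthogonal K _).mp horth _ hiK
    simp only [PiLp.inner_apply, RCLike.inner_apply, conj_trivial] at h1
    have h3 : (Φ.mulVec (a - x₀)) i = ∑ j, Φ i j * (a - x₀) j := by
      simp [Matrix.mulVec, dotProduct]
    simp only [Pi.zero_apply]
    rw [h3]
    refine (Finset.sum_congr rfl fun j _ => ?_).trans h1
    rw [mul_comm]
    rfl
  have hΦx₀ : Φ.mulVec x₀ = Φ.mulVec a := by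
    rw [Matrix.mulVec_sub, sub_eq_zero] at hx₀ker
    exact hx₀ker.symm
  have hAmulΦ : ∀ z : Fin d → ℝ, (Φᵀ * D * Φ).mulVec z = (Φᵀ * D).mulVec (Φ.mulVec z) := by
    intro z
    rw [← Matrix.mulVec_mulVec]
  have hAx₀ : (Φᵀ * D * Φ).mulVec x₀ = (Φᵀ * D).mulVec g := by
    rw [hAmulΦ, hΦx₀, ← hAmulΦ, hAa]
  constructor
  · -- existence and uniqueness
    refine ⟨x₀, ⟨hx₀R, hAx₀⟩, ?_⟩
    intro x' ⟨hx'R, hx'A⟩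
    have hsub : (Φᵀ * D * Φ).mulVec (x' - x₀) = 0 := by
      rw [Matrix.mulVec_sub, hx'A, hAx₀, sub_self]
    have hker' := hker _ hsub
    have := huniq0 (x' - x₀) (Submodule.sub_mem _ hx'R hx₀R) hker'
    exact sub_eq_zero.mp this
  · -- gradient
    intro x hxR hxA
    -- Φ x = proj g
    have hΦx : Φ.mulVec x = proj g := by
      have hsub : (Φᵀ * D * Φ).mulVec (x - a) = 0 := by
        rw [Matrix.mulVec_sub, hxA, hAa, sub_self]
      have := hker _ hsub
      rw [Matrix.mulVec_sub, sub_eq_zero] at this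
      rw [this, ← ha]
    -- proj is characterized by the orthogonality relations, hence linear
    have hchar : ∀ (v : Fin n → ℝ) (c : Fin d → ℝ),
        (∀ c' : Fin d → ℝ, Φ.mulVec c' ⬝ᵥ D.mulVec (v - Φ.mulVec c) = 0) →
        proj v = Φ.mulVec c := by
      intro v c horth
      obtain ⟨c₀, hc₀⟩ := hproj_mem v
      have key : ∀ c' : Fin d → ℝ,
          Φ.mulVec c' ⬝ᵥ D.mulVec (Φ.mulVec c₀ - Φ.mulVec c) = 0 := by
        intro c'
        have h1 := hproj_orth v c'
        rw [hc₀] at h1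
        have h2 := horth c'
        have : D.mulVec (Φ.mulVec c₀ - Φ.mulVec c) =
            D.mulVec (v - Φ.mulVec c) - D.mulVec (v - Φ.mulVec c₀) := by
          rw [← Matrix.mulVec_sub D (v - Φ.mulVec c) (v - Φ.mulVec c₀)]
          congr 1
          abel
        rw [this, dotProduct_sub, h1, h2, sub_zero]
      have h3 := key (c₀ - c)
      rw [Matrix.mulVec_sub] at h3
      have h4 := hpos _ h3
      rw [sub_eq_zero] at h4
      rw [hc₀, h4]
    have hadd : ∀ u v : Fin n → ℝ, proj (u + v) = proj u + proj v := by
      intro u v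
      obtain ⟨cu, hcu⟩ := hproj_mem u
      obtain ⟨cv, hcv⟩ := hproj_mem v
      have : proj u + proj v = Φ.mulVec (cu + cv) := by
        rw [hcu, hcv, Matrix.mulVec_add]
      rw [this]
      apply hchar
      intro c'
      have hsplit : (u + v) - Φ.mulVec (cu + cv) = (u - proj u) + (v - proj v) := by
        rw [Matrix.mulVec_add, ← hcu, ← hcv]
        abel
      rw [hsplit, Matrix.mulVec_add, dotProduct_add, hproj_orth u c', hproj_orth v c',
        add_zero]
    have hsmul : ∀ (t : ℝ) (v : Fin n → ℝ), proj (t • v) = t • proj v := by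
      intro t v
      obtain ⟨cv, hcv⟩ := hproj_mem v
      have : t • proj v = Φ.mulVec (t • cv) := by
        rw [hcv, Matrix.mulVec_smul]
      rw [this]
      apply hchar
      intro c'
      have hsplit : t • v - Φ.mulVec (t • cv) = t • (v - proj v) := by
        rw [Matrix.mulVec_smul, ← hcv, smul_sub]
      rw [hsplit, Matrix.mulVec_smul, dotProduct_smul, hproj_orth v c', smul_zero]
    -- matrix representation of proj
    set plin : (Fin n → ℝ) →ₗ[ℝ] (Fin n → ℝ) :=
      { toFun := proj, map_add' := hadd, map_smul' := hsmul } with hplin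
    set N : Matrix (Fin n) (Fin n) ℝ := LinearMap.toMatrix' plin with hNdef
    have hN : ∀ v : Fin n → ℝ, N.mulVec v = proj v := by
      intro v
      rw [hNdef, ← Matrix.toLin'_apply, Matrix.toLin'_toMatrix']
      rfl
    -- affine form of the Bellman error
    set M : Matrix (Fin n) (Fin d) ℝ := (P - 1) * Φ with hM
    have haff : ∀ θ' : EuclideanSpace ℝ (Fin d),
        T (Φ.mulVec θ') - Φ.mulVec θ' = r + M.mulVec θ' := by
      intro θ'
      rw [hT, hM, Matrix.sub_mul, Matrix.one_mul, Matrix.sub_mulVec, ← Matrix.mulVec_mulVec]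
      abel
    -- the quadratic objective
    set Q : (Fin n → ℝ) → ℝ := fun v => ∑ i, N.mulVec v i * ((D * N).mulVec v) i with hQdef
    have hJQ : ∀ θ' : EuclideanSpace ℝ (Fin d), J θ' = (1/2 : ℝ) * Q (r + M.mulVec θ') := by
      intro θ'
      rw [hJ θ', haff θ', hQdef]
      simp only [← hN, Matrix.mulVec_mulVec, dotProduct]
    -- continuous linear maps
    set Mlin : EuclideanSpace ℝ (Fin d) →ₗ[ℝ] (Fin n → ℝ) :=
      { toFun := fun θ' => M.mulVec θ'
        map_add' := fun u v => Matrix.mulVec_add M u v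
        map_smul' := fun t v => by simpa using Matrix.mulVec_smul M t v } with hMlin
    set Mc : EuclideanSpace ℝ (Fin d) →L[ℝ] (Fin n → ℝ) :=
      LinearMap.toContinuousLinearMap Mlin with hMc
    have haffd : HasFDerivAt (fun θ' : EuclideanSpace ℝ (Fin d) => r + M.mulVec θ') Mc θ := by
      have h := Mc.hasFDerivAt (x := θ)
      exact h.const_add r
    set Lc : Fin n → ((Fin n → ℝ) →L[ℝ] ℝ) := fun i =>
      LinearMap.toContinuousLinearMap
        { toFun := fun v => N.mulVec v i
          map_add' := fun u v => by simp [Matrix.mulVec_add]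
          map_smul' := fun t v => by simp [Matrix.mulVec_smul] } with hLc
    set Kc : Fin n → ((Fin n → ℝ) →L[ℝ] ℝ) := fun i =>
      LinearMap.toContinuousLinearMap
        { toFun := fun v => (D * N).mulVec v i
          map_add' := fun u v => by simp [Matrix.mulVec_add]
          map_smul' := fun t v => by simp [Matrix.mulVec_smul] } with hKc
    set u₀ : Fin n → ℝ := r + M.mulVec θ with hu₀def
    have hu₀ : u₀ = g := by rw [hu₀def, hg, haff θ]
    set D' : (Fin n → ℝ) →L[ℝ] ℝ :=
      ∑ i, ((Lc i u₀) • Kc i + (Kc i u₀) • Lc i) with hD'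
    have hQd : HasFDerivAt Q D' u₀ := by
      have h : ∀ i ∈ Finset.univ,
          HasFDerivAt (fun v : Fin n → ℝ => N.mulVec v i * ((D * N).mulVec v) i)
            ((Lc i u₀) • Kc i + (Kc i u₀) • Lc i) u₀ := by
        intro i _
        exact ((Lc i).hasFDerivAt).mul ((Kc i).hasFDerivAt)
      exact HasFDerivAt.fun_sum h
    have hcomp : HasFDerivAt (fun θ' : EuclideanSpace ℝ (Fin d) => Q (r + M.mulVec θ'))
        (D'.comp Mc) θ := by have h := hQd.comp θ haffd; exact h
    have hJd : HasFDerivAt J ((1/2 : ℝ) • (D'.comp Mc)) θ := by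
      have h2 := hcomp.const_mul (1/2 : ℝ)
      have hfun : J = fun θ' : EuclideanSpace ℝ (Fin d) => (1/2 : ℝ) * Q (r + M.mulVec θ') :=
        funext hJQ
      rw [hfun]
      exact h2
    rw [hasGradientAt_iff_hasFDerivAt]
    have hD'app : ∀ w : Fin n → ℝ, D' w =
        N.mulVec u₀ ⬝ᵥ (D * N).mulVec w + (D * N).mulVec u₀ ⬝ᵥ N.mulVec w := by
      intro w
      rw [hD']
      simp only [ContinuousLinearMap.sum_apply, ContinuousLinearMap.add_apply,
        ContinuousLinearMap.smul_apply, hLc, hKc, LinearMap.coe_toContinuousLinearMap',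
        LinearMap.coe_mk, AddHom.coe_mk, smul_eq_mul]
      simp [dotProduct, Finset.sum_add_distrib]
    -- the common value of both functionals
    have hcommon : ∀ h : Fin d → ℝ,
        proj g ⬝ᵥ D.mulVec (M.mulVec h) = proj g ⬝ᵥ D.mulVec (proj (M.mulVec h)) := by
      intro h
      have h0 := hproj_orth (M.mulVec h) x
      rw [hΦx] at h0
      have h1 : proj g ⬝ᵥ (D.mulVec (M.mulVec h) - D.mulVec (proj (M.mulVec h))) = 0 := by
        rw [← Matrix.mulVec_sub]
        exact h0
      rw [dotProduct_sub] at h1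
      linarith
    have hfinal : (InnerProductSpace.toDual ℝ (EuclideanSpace ℝ (Fin d)))
        (WithLp.toLp 2 ((Φᵀ * D * (P - 1) * Φ)ᵀ.mulVec x)) = (1/2 : ℝ) • (D'.comp Mc) := by
      apply ContinuousLinearMap.ext
      intro h
      have hL : (InnerProductSpace.toDual ℝ (EuclideanSpace ℝ (Fin d)))
          (WithLp.toLp 2 ((Φᵀ * D * (P - 1) * Φ)ᵀ.mulVec x)) h
          = ((Φᵀ * D * (P - 1) * Φ)ᵀ.mulVec x) ⬝ᵥ (h : Fin d → ℝ) := by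
        rw [InnerProductSpace.toDual_apply_apply]
        simp [PiLp.inner_apply, RCLike.inner_apply, dotProduct]
        exact Finset.sum_congr rfl fun _ _ => mul_comm _ _
      have hC : Φᵀ * D * (P - 1) * Φ = Φᵀ * (D * M) := by
        rw [hM, Matrix.mul_assoc (Φᵀ * D) (P - 1) Φ, Matrix.mul_assoc Φᵀ D ((P - 1) * Φ)]
      have hLHS : ((Φᵀ * D * (P - 1) * Φ)ᵀ.mulVec x) ⬝ᵥ (h : Fin d → ℝ)
          = proj g ⬝ᵥ D.mulVec (M.mulVec h) := by
        rw [dotT_left, hC, ← Matrix.mulVec_mulVec, dotT_right, hΦx, ← Matrix.mulVec_mulVec]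
      have hRHS : ((1/2 : ℝ) • (D'.comp Mc)) h = proj g ⬝ᵥ D.mulVec (proj (M.mulVec h)) := by
        have hMch : Mc h = M.mulVec h := rfl
        rw [ContinuousLinearMap.smul_apply, ContinuousLinearMap.comp_apply, hMch,
          hD'app (M.mulVec h), hu₀, hN, hN]
        have e1 : (D * N).mulVec (M.mulVec h) = D.mulVec (proj (M.mulVec h)) := by
          rw [← Matrix.mulVec_mulVec, hN]
        have e2 : (D * N).mulVec g = D.mulVec (proj g) := by
          rw [← Matrix.mulVec_mulVec, hN]
        rw [e1, e2]
        have e3 : D.mulVec (proj g) ⬝ᵥ proj (M.mulVec h)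
            = proj g ⬝ᵥ D.mulVec (proj (M.mulVec h)) := by
          rw [dotProduct_comm, hsymm]
        rw [e3]
        simp [smul_eq_mul]
        ring
      rw [hL, hLHS, hRHS, hcommon h]
    rw [hfinal]
    exact hJd
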